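/- Let M and B be real symmetric n×n matrices with M positive definite and B positive semidefinite, let μ > 0, c_B > 0 and γ ∈ (1/2, 1], and assume 2μ c_B · xᵀMx ≤ xᵀBx ≤ 2μ · xᵀMx for all x ∈ ℝⁿ. Define r(φ) := γφ − (1/(2μ)) M⁻¹Bφ. Then for all φ ∈ ℝⁿ: μ · r(φ)ᵀ M r(φ) ≤ (1 + 1/c_B) · φᵀBφ. -/

import Mathlib

set_option maxHeartbeats 800000

open scoped Matrix

/-- Symmetry swap for dot products against a symmetric matrix. -/
lemma symm_dot_swap {n : ℕ} (A : Matrix (Fin n) (Fin n) ℝ) (hA : A.IsSymm)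
    (x y : Fin n → ℝ) : x ⬝ᵥ A.mulVec y = y ⬝ᵥ A.mulVec x := by
  rw [Matrix.dotProduct_mulVec, ← Matrix.mulVec_transpose, hA.eq, dotProduct_comm]

/-- Cauchy–Schwarz for a real symmetric positive semidefinite matrix. -/
lemma psd_cauchy_schwarz {n : ℕ} (A : Matrix (Fin n) (Fin n) ℝ) (hA : A.IsSymm)
    (hpsd : A.PosSemidef) (x y : Fin n → ℝ) :
    (x ⬝ᵥ A.mulVec y) ^ 2 ≤ (x ⬝ᵥ A.mulVec x) * (y ⬝ᵥ A.mulVec y) := by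
  have key : ∀ t : ℝ, 0 ≤ (y ⬝ᵥ A.mulVec y) * (t * t) + (2 * (x ⬝ᵥ A.mulVec y)) * t
      + (x ⬝ᵥ A.mulVec x) := by
    intro t
    have h0 := hpsd.dotProduct_mulVec_nonneg (x + t • y)
    simp only [star_trivial] at h0
    have hswap := symm_dot_swap A hA x y
    simp only [Matrix.mulVec_add, Matrix.mulVec_smul, dotProduct_add,
      add_dotProduct, dotProduct_smul, smul_dotProduct,
      smul_eq_mul] at h0
    rw [hswap] at h0 ⊢
    ring_nf at h0 ⊢
    linarith [h0]
  have hd := discrim_le_zero key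
  rw [discrim] at hd
  nlinarith [hd]

theorem stmt_11
    {n : ℕ} (M B : Matrix (Fin n) (Fin n) ℝ)
    (hM : M.IsSymm) (hB : B.IsSymm) (hMpd : M.PosDef) (hBpsd : B.PosSemidef)
    (μ c_B γ : ℝ) (hμ : 0 < μ) (hcB : 0 < c_B) (hγ : 1 / 2 < γ ∧ γ ≤ 1)
    (hlow : ∀ x : Fin n → ℝ, 2 * μ * c_B * (x ⬝ᵥ M.mulVec x) ≤ x ⬝ᵥ B.mulVec x)
    (hhigh : ∀ x : Fin n → ℝ, x ⬝ᵥ B.mulVec x ≤ 2 * μ * (x ⬝ᵥ M.mulVec x))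
    (r : (Fin n → ℝ) → (Fin n → ℝ))
    (hr : ∀ φ : Fin n → ℝ, r φ = γ • φ - (1 / (2 * μ)) • (M⁻¹ * B).mulVec φ) :
    ∀ φ : Fin n → ℝ,
      μ * (r φ ⬝ᵥ M.mulVec (r φ)) ≤ (1 + 1 / c_B) * (φ ⬝ᵥ B.mulVec φ) := by
  intro φ
  set w : Fin n → ℝ := (M⁻¹ * B).mulVec φ with hw_def
  have hMinv : M * M⁻¹ = 1 := Matrix.mul_nonsing_inv M hMpd.det_pos.ne'.isUnit
  have hMw : M.mulVec w = B.mulVec φ := by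
    rw [hw_def, Matrix.mulVec_mulVec, ← Matrix.mul_assoc, hMinv, Matrix.one_mul]
  set a := φ ⬝ᵥ M.mulVec φ with ha_def
  set b := φ ⬝ᵥ B.mulVec φ with hb_def
  set t := w ⬝ᵥ M.mulVec w with ht_def
  have h1 : φ ⬝ᵥ M.mulVec w = b := by rw [hMw]
  have h2 : w ⬝ᵥ M.mulVec φ = b := by rw [symm_dot_swap M hM, h1]
  have h3 : t = φ ⬝ᵥ B.mulVec w := by
    rw [ht_def, hMw, symm_dot_swap B hB]
  have ht0 : 0 ≤ t := by simpa using hMpd.posSemidef.dotProduct_mulVec_nonneg w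
  have hb0 : 0 ≤ b := by simpa using hBpsd.dotProduct_mulVec_nonneg φ
  -- t ≤ 2 μ b
  have hcs := psd_cauchy_schwarz B hB hBpsd φ w
  have hBw : w ⬝ᵥ B.mulVec w ≤ 2 * μ * t := by
    have := hhigh w; rw [← ht_def] at this; exact this
  have htb : t ≤ 2 * μ * b := by
    rw [← h3] at hcs
    rcases eq_or_lt_of_le ht0 with h | h
    · nlinarith
    · nlinarith [mul_le_mul_of_nonneg_left hBw hb0]
  -- μ a ≤ b / (2 c_B)
  have hab : 2 * μ * c_B * a ≤ b := hlow φ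
  -- expansion
  have hexp : r φ ⬝ᵥ M.mulVec (r φ)
      = γ ^ 2 * a - (γ / μ) * b + (1 / (4 * μ ^ 2)) * t := by
    rw [hr φ, ← hw_def]
    simp only [Matrix.mulVec_sub, Matrix.mulVec_smul, dotProduct_sub,
      sub_dotProduct, dotProduct_smul, smul_dotProduct,
      smul_eq_mul, ← ha_def, h1, h2, ← ht_def]
    field_simp
    ring
  have hquarter : μ * (γ ^ 2 * a - γ / μ * b + 1 / (4 * μ ^ 2) * t)
      = γ ^ 2 * (μ * a) - γ * b + t / (4 * μ) := by
    field_simp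
  rw [hexp, hquarter]
  have ha0 : 0 ≤ a := by simpa using hMpd.posSemidef.dotProduct_mulVec_nonneg φ
  have hγ1 := hγ.1
  have hγ2 := hγ.2
  have hγsq : γ ^ 2 ≤ 1 := by nlinarith
  have hma : 0 ≤ μ * a := mul_nonneg hμ.le ha0
  have hmua : μ * a ≤ b / (2 * c_B) := by
    rw [le_div_iff₀ (by positivity)]
    nlinarith [hab]
  have key1 : γ ^ 2 * (μ * a) ≤ b / (2 * c_B) :=
    le_trans (mul_le_of_le_one_left hma hγsq) hmua
  have key2 : t / (4 * μ) ≤ b / 2 := by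
    rw [div_le_div_iff₀ (by positivity) (by norm_num)]
    nlinarith [htb]
  have key3 : b / (2 * c_B) - γ * b + b / 2 ≤ (1 + 1 / c_B) * b := by
    have hbc : 0 ≤ b / c_B := div_nonneg hb0 hcB.le
    have e1 : b / (2 * c_B) = (b / c_B) / 2 := by ring
    have e2 : (1 + 1 / c_B) * b = b + b / c_B := by ring
    rw [e1, e2]
    nlinarith [hbc, hb0]
  linarith
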